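/- Let S be a finite type and P a row-stochastic matrix on S, with residual coupling matrix Q indexed by S × S (defined via κ(x,y) = ∑_z min(P(x,z),P(y,z)) by Q((x,y),(x',y')) = (P(x,x') − min(P(x,x'),P(y,x')))·(P(y,y') − min(P(x,y'),P(y,y')))/(1 − κ(x,y)) for x ≠ y with κ(x,y) < 1, and 0 otherwise). Let r(Q) denote the spectral radius of Q, i.e., the largest modulus of a complex eigenvalue of Q. Then for every ε > 0 there exists N ∈ ℕ such that for all n ≥ N and all probability vectors μ, ν on S: ∑_x |(μPⁿ)(x) − (νPⁿ)(x)| ≤ (r(Q) + ε)ⁿ · ∑_x |μ(x) − ν(x)|. -/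

import Mathlib

open Finset

variable {S : Type*} [Fintype S] [DecidableEq S]

/-- The overlap coefficient `κ(x,y) = ∑_z min(P(x,z), P(y,z))` of a transition matrix. -/
noncomputable def overlap (P : S → S → ℝ) (x y : S) : ℝ := ∑ z, min (P x z) (P y z)

/-- The residual coupling matrix `Q` of a transition matrix `P`. -/
noncomputable def residualQ (P : S → S → ℝ) : Matrix (S × S) (S × S) ℝ :=
  Matrix.of fun p p' =>
    if p.1 ≠ p.2 ∧ overlap P p.1 p.2 < 1 then
      (P p.1 p'.1 - min (P p.1 p'.1) (P p.2 p'.1)) *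
        (P p.2 p'.2 - min (P p.1 p'.2) (P p.2 p'.2)) / (1 - overlap P p.1 p.2)
    else 0

/-- The spectral radius of a real square matrix: the largest modulus of a complex
eigenvalue. -/
noncomputable def specRad {I : Type*} [Fintype I] [DecidableEq I]
    (A : Matrix I I ℝ) : ℝ :=
  sSup {r : ℝ | ∃ c ∈ spectrum ℂ (A.map (Complex.ofReal ·)), r = ‖c‖}

attribute [local instance] Matrix.linftyOpNormedRing Matrix.linftyOpNormedAlgebra

open scoped Matrix

namespace Thm1Aux

/-- The ℓ¹ distance between rows `x` and `y` of `Pⁿ`, as a vector on pairs. -/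
noncomputable def gvec (P : S → S → ℝ) (n : ℕ) : S × S → ℝ :=
  fun p => ∑ z, |(Matrix.of P ^ n) p.1 z - (Matrix.of P ^ n) p.2 z|

theorem residualQ_nonneg (P : S → S → ℝ) (hP0 : ∀ x y, 0 ≤ P x y)
    (p p' : S × S) : 0 ≤ residualQ P p p' := by
  unfold residualQ
  simp only [Matrix.of_apply]
  split
  · next h =>
    apply div_nonneg
    · exact mul_nonneg (sub_nonneg.2 (min_le_left _ _)) (sub_nonneg.2 (min_le_right _ _))
    · linarith [h.2]
  · exact le_rfl

theorem overlap_le_one (P : S → S → ℝ) (hP1 : ∀ x, ∑ y, P x y = 1) (x y : S) :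
    overlap P x y ≤ 1 := by
  calc overlap P x y ≤ ∑ z, P x z := Finset.sum_le_sum fun z _ => min_le_left _ _
    _ = 1 := hP1 x

theorem rows_eq_of_overlap_eq_one (P : S → S → ℝ) (hP1 : ∀ x, ∑ y, P x y = 1)
    (x y : S) (h : ¬ overlap P x y < 1) : ∀ z, P x z = P y z := by
  have h2 : overlap P x y = 1 := le_antisymm (overlap_le_one P hP1 x y) (not_lt.1 h)
  have hx : ∀ z ∈ Finset.univ, min (P x z) (P y z) = P x z := by
    rw [← Finset.sum_eq_sum_iff_of_le (fun z _ => min_le_left (P x z) (P y z))]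
    rw [hP1 x]; exact h2
  have hy : ∀ z ∈ Finset.univ, min (P x z) (P y z) = P y z := by
    rw [← Finset.sum_eq_sum_iff_of_le (fun z _ => min_le_right (P x z) (P y z))]
    rw [hP1 y]; exact h2
  intro z
  rw [← hx z (Finset.mem_univ z), hy z (Finset.mem_univ z)]

theorem rows_pow_eq (P : S → S → ℝ) (x y : S) (hrow : ∀ z, P x z = P y z)
    (n : ℕ) (hn : 1 ≤ n) : ∀ z, (Matrix.of P ^ n) x z = (Matrix.of P ^ n) y z := by
  obtain ⟨m, rfl⟩ := Nat.exists_eq_add_of_le hn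
  intro z
  rw [add_comm, pow_succ', Matrix.mul_apply, Matrix.mul_apply]
  exact Finset.sum_congr rfl fun w _ => by rw [Matrix.of_apply, Matrix.of_apply, hrow w]

/-- The key coupling inequality: one step of the residual matrix dominates the
evolution of row ℓ¹ distances. -/
theorem gvec_succ_le (P : S → S → ℝ) (hP0 : ∀ x y, 0 ≤ P x y)
    (hP1 : ∀ x, ∑ y, P x y = 1) (n : ℕ) (p : S × S) :
    gvec P (n + 1) p ≤ (residualQ P *ᵥ gvec P n) p := by
  obtain ⟨x, y⟩ := p
  by_cases hcond : x ≠ y ∧ overlap P x y < 1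
  · obtain ⟨hxy, hκ⟩ := hcond
    have hκ' : (0:ℝ) < 1 - overlap P x y := by linarith
    set κ := overlap P x y with hκdef
    set A : Matrix S S ℝ := Matrix.of P with hA
    set a : S → ℝ := fun z => P x z - min (P x z) (P y z) with ha
    set b : S → ℝ := fun z => P y z - min (P x z) (P y z) with hb
    have ha0 : ∀ z, 0 ≤ a z := fun z => sub_nonneg.2 (min_le_left _ _)
    have hb0 : ∀ z, 0 ≤ b z := fun z => sub_nonneg.2 (min_le_right _ _)
    have hsa : ∑ z, a z = 1 - κ := by
      simp only [ha, Finset.sum_sub_distrib, hP1 x, hκdef, overlap]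
    have hsb : ∑ z, b z = 1 - κ := by
      simp only [hb, Finset.sum_sub_distrib, hP1 y, hκdef, overlap]
    -- key pointwise identity
    have key : ∀ z, (∑ x', ∑ y', a x' * b y' * ((A ^ n) x' z - (A ^ n) y' z))
        = (1 - κ) * ((A ^ (n+1)) x z - (A ^ (n+1)) y z) := by
      intro z
      set u : S → ℝ := fun w => (A ^ n) w z with hu
      have step1 : ∀ x', (∑ y', a x' * b y' * (u x' - u y'))
          = a x' * u x' * (1 - κ) - a x' * ∑ y', b y' * u y' := by
        intro x'
        calc ∑ y', a x' * b y' * (u x' - u y')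
            = ∑ y', (a x' * u x' * b y' - a x' * (b y' * u y')) :=
              Finset.sum_congr rfl fun y' _ => by ring
          _ = a x' * u x' * (∑ y', b y') - a x' * ∑ y', b y' * u y' := by
              rw [Finset.sum_sub_distrib, ← Finset.mul_sum, ← Finset.mul_sum]
          _ = a x' * u x' * (1 - κ) - a x' * ∑ y', b y' * u y' := by rw [hsb]
      have step2 : (∑ x', ∑ y', a x' * b y' * (u x' - u y'))
          = (1 - κ) * ((∑ w, a w * u w) - (∑ w, b w * u w)) := by
        calc (∑ x', ∑ y', a x' * b y' * (u x' - u y'))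
            = ∑ x', (a x' * u x' * (1 - κ) - a x' * ∑ y', b y' * u y') :=
              Finset.sum_congr rfl fun x' _ => step1 x'
          _ = (∑ x', a x' * u x' * (1 - κ)) - (∑ x', a x') * (∑ y', b y' * u y') := by
              rw [Finset.sum_sub_distrib, Finset.sum_mul]
          _ = (1 - κ) * ((∑ w, a w * u w) - (∑ w, b w * u w)) := by
              rw [hsa, ← Finset.sum_mul]; ring
      have step3 : (∑ w, a w * u w) - (∑ w, b w * u w)
          = (A ^ (n+1)) x z - (A ^ (n+1)) y z := by
        have hax : ∑ w, a w * u w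
            = (A ^ (n+1)) x z - ∑ w, min (P x w) (P y w) * u w := by
          rw [pow_succ', Matrix.mul_apply]
          rw [← Finset.sum_sub_distrib]
          exact Finset.sum_congr rfl fun w _ => by
            simp only [ha, hA, Matrix.of_apply, hu]; ring
        have hbx : ∑ w, b w * u w
            = (A ^ (n+1)) y z - ∑ w, min (P x w) (P y w) * u w := by
          rw [pow_succ', Matrix.mul_apply]
          rw [← Finset.sum_sub_distrib]
          exact Finset.sum_congr rfl fun w _ => by
            simp only [hb, hA, Matrix.of_apply, hu]; ring
        rw [hax, hbx]; ring
      rw [step2, step3]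
    -- compute the right-hand side
    have hrhs : (residualQ P *ᵥ gvec P n) (x, y)
        = ∑ x', ∑ y', a x' * b y' * gvec P n (x', y') / (1 - κ) := by
      rw [Matrix.mulVec, dotProduct]
      rw [Fintype.sum_prod_type]
      refine Finset.sum_congr rfl fun x' _ => Finset.sum_congr rfl fun y' _ => ?_
      unfold residualQ
      simp only [Matrix.of_apply]
      rw [if_pos ⟨hxy, hκ⟩]
      simp only [ha, hb, hκdef]
      ring
    rw [hrhs]
    -- now bound the left-hand side
    have hdiff : ∀ z, |(A ^ (n+1)) x z - (A ^ (n+1)) y z|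
        ≤ (∑ x', ∑ y', a x' * b y' * |(A ^ n) x' z - (A ^ n) y' z|) / (1 - κ) := by
      intro z
      rw [le_div_iff₀ hκ']
      have h1 : |(A ^ (n+1)) x z - (A ^ (n+1)) y z| * (1 - κ)
          = |(∑ x', ∑ y', a x' * b y' * ((A ^ n) x' z - (A ^ n) y' z))| := by
        rw [key z, abs_mul, abs_of_pos hκ']
        ring
      rw [h1]
      calc |(∑ x', ∑ y', a x' * b y' * ((A ^ n) x' z - (A ^ n) y' z))|
          ≤ ∑ x', |∑ y', a x' * b y' * ((A ^ n) x' z - (A ^ n) y' z)| :=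
            Finset.abs_sum_le_sum_abs _ _
        _ ≤ ∑ x', ∑ y', |a x' * b y' * ((A ^ n) x' z - (A ^ n) y' z)| :=
            Finset.sum_le_sum fun x' _ => Finset.abs_sum_le_sum_abs _ _
        _ = ∑ x', ∑ y', a x' * b y' * |(A ^ n) x' z - (A ^ n) y' z| := by
            refine Finset.sum_congr rfl fun x' _ => Finset.sum_congr rfl fun y' _ => ?_
            rw [abs_mul, abs_mul, abs_of_nonneg (ha0 x'), abs_of_nonneg (hb0 y')]
    calc gvec P (n+1) (x, y)
        = ∑ z, |(A ^ (n+1)) x z - (A ^ (n+1)) y z| := rfl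
      _ ≤ ∑ z, (∑ x', ∑ y', a x' * b y' * |(A ^ n) x' z - (A ^ n) y' z|) / (1 - κ) :=
          Finset.sum_le_sum fun z _ => hdiff z
      _ = ∑ x', ∑ y', a x' * b y' * gvec P n (x', y') / (1 - κ) := by
          rw [← Finset.sum_div, Finset.sum_comm, Finset.sum_div]
          refine Finset.sum_congr rfl fun x' _ => ?_
          rw [Finset.sum_comm, Finset.sum_div]
          refine Finset.sum_congr rfl fun y' _ => ?_
          rw [← Finset.mul_sum]
          rfl
  · -- degenerate case: the row of Q is zero and the rows of powers agree
    have hrhs : (residualQ P *ᵥ gvec P n) (x, y) = 0 := by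
      rw [Matrix.mulVec, dotProduct]
      refine Finset.sum_eq_zero fun p' _ => ?_
      unfold residualQ
      simp only [Matrix.of_apply]
      rw [if_neg hcond]
      ring
    have hlhs : gvec P (n+1) (x, y) = 0 := by
      unfold gvec
      refine Finset.sum_eq_zero fun z _ => ?_
      by_cases hxy : x = y
      · subst hxy; simp
      · have hko : ¬ overlap P x y < 1 := by
          by_contra hk
          exact hcond ⟨hxy, hk⟩
        have := rows_pow_eq P x y (rows_eq_of_overlap_eq_one P hP1 x y hko)
          (n+1) (Nat.le_add_left 1 n) z
        rw [this, sub_self, abs_zero]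
    rw [hrhs, hlhs]

theorem gvec_le_pow (P : S → S → ℝ) (hP0 : ∀ x y, 0 ≤ P x y)
    (hP1 : ∀ x, ∑ y, P x y = 1) (n : ℕ) (p : S × S) :
    gvec P n p ≤ ((residualQ P ^ n) *ᵥ fun _ => (2:ℝ)) p := by
  induction n generalizing p with
  | zero =>
    have hrhs : (((residualQ P) ^ 0) *ᵥ fun _ => (2:ℝ)) p = 2 := by
      rw [pow_zero, Matrix.one_mulVec]
    rw [hrhs]
    unfold gvec
    rw [pow_zero]
    calc ∑ z, |(1 : Matrix S S ℝ) p.1 z - (1 : Matrix S S ℝ) p.2 z|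
        ≤ ∑ z, ((1 : Matrix S S ℝ) p.1 z + (1 : Matrix S S ℝ) p.2 z) := by
          refine Finset.sum_le_sum fun z _ => ?_
          have h1 : (0:ℝ) ≤ (1 : Matrix S S ℝ) p.1 z := by
            rw [Matrix.one_apply]; split <;> norm_num
          have h2 : (0:ℝ) ≤ (1 : Matrix S S ℝ) p.2 z := by
            rw [Matrix.one_apply]; split <;> norm_num
          calc |(1 : Matrix S S ℝ) p.1 z - (1 : Matrix S S ℝ) p.2 z|
              ≤ |(1 : Matrix S S ℝ) p.1 z| + |(1 : Matrix S S ℝ) p.2 z| := abs_sub _ _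
            _ = (1 : Matrix S S ℝ) p.1 z + (1 : Matrix S S ℝ) p.2 z := by
                rw [abs_of_nonneg h1, abs_of_nonneg h2]
      _ = 2 := by
          rw [Finset.sum_add_distrib]
          have hrow : ∀ w : S, ∑ z, (1 : Matrix S S ℝ) w z = 1 := by
            intro w
            simp [Matrix.one_apply]
          rw [hrow, hrow]; norm_num
  | succ n ih =>
    calc gvec P (n+1) p ≤ (residualQ P *ᵥ gvec P n) p := gvec_succ_le P hP0 hP1 n p
      _ ≤ (residualQ P *ᵥ ((residualQ P ^ n) *ᵥ fun _ => (2:ℝ))) p := by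
          rw [Matrix.mulVec, Matrix.mulVec, dotProduct, dotProduct]
          exact Finset.sum_le_sum fun p' _ =>
            mul_le_mul_of_nonneg_left (ih p') (residualQ_nonneg P hP0 p p')
      _ = ((residualQ P ^ (n+1)) *ᵥ fun _ => (2:ℝ)) p := by
          rw [Matrix.mulVec_mulVec, ← pow_succ']

theorem map_ofReal_pow {I : Type*} [Fintype I] [DecidableEq I]
    (A : Matrix I I ℝ) (n : ℕ) :
    (A.map (Complex.ofReal ·)) ^ n = (A ^ n).map (Complex.ofReal ·) := by
  induction n with
  | zero =>
    rw [pow_zero, pow_zero]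
    ext p q
    simp [Matrix.map_apply, Matrix.one_apply]
    split <;> simp
  | succ n ih =>
    rw [pow_succ, pow_succ, ih]
    ext p q
    simp only [Matrix.mul_apply, Matrix.map_apply]
    push_cast
    rfl

theorem rowsum_le_norm {I : Type*} [Fintype I] [DecidableEq I]
    (A : Matrix I I ℝ) (p : I) :
    ∑ q, |A p q| ≤ ‖A.map (Complex.ofReal ·)‖ := by
  rw [Matrix.linfty_opNorm_def]
  have h1 : (∑ q, ‖(A.map (Complex.ofReal ·)) p q‖₊)
      ≤ Finset.univ.sup fun i => ∑ j, ‖(A.map (Complex.ofReal ·)) i j‖₊ :=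
    Finset.le_sup (f := fun i => ∑ j, ‖(A.map (Complex.ofReal ·)) i j‖₊) (Finset.mem_univ p)
  have h2 : ∑ q, |A p q| = ((∑ q, ‖(A.map (Complex.ofReal ·)) p q‖₊ : NNReal) : ℝ) := by
    push_cast
    refine Finset.sum_congr rfl fun q _ => ?_
    exact ((Complex.norm_real (A p q)).trans (Real.norm_eq_abs _)).symm
  rw [h2]
  exact_mod_cast h1

theorem tv_bound (A : Matrix S S ℝ) (c : S → ℝ) (hc : ∑ x, c x = 0)
    (B : ℝ) (hB : 0 ≤ B) (hAB : ∀ x y, ∑ z, |A x z - A y z| ≤ B) :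
    ∑ z, |∑ x, c x * A x z| ≤ B / 2 * ∑ x, |c x| := by
  set cp : S → ℝ := fun x => max (c x) 0 with hcp
  set cm : S → ℝ := fun x => max (-c x) 0 with hcm
  have hcp0 : ∀ x, 0 ≤ cp x := fun x => le_max_right _ _
  have hcm0 : ∀ x, 0 ≤ cm x := fun x => le_max_right _ _
  have hdiff : ∀ x, cp x - cm x = c x := by
    intro x
    rcases le_total 0 (c x) with h | h
    · simp [hcp, hcm, max_eq_left h, max_eq_right (neg_nonpos.2 h)]
    · simp [hcp, hcm, max_eq_right h, max_eq_left (neg_nonneg.2 h)]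
  have habs : ∀ x, cp x + cm x = |c x| := by
    intro x
    rcases le_total 0 (c x) with h | h
    · rw [hcp, hcm]
      simp [max_eq_left h, max_eq_right (neg_nonpos.2 h), abs_of_nonneg h]
    · rw [hcp, hcm]
      simp [max_eq_right h, max_eq_left (neg_nonneg.2 h), abs_of_nonpos h]
  set t : ℝ := ∑ x, cp x with ht
  have ht0 : 0 ≤ t := Finset.sum_nonneg fun x _ => hcp0 x
  have hcmsum : ∑ x, cm x = t := by
    have h1 : (∑ x, cp x) - (∑ x, cm x) = 0 := by
      rw [← Finset.sum_sub_distrib]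
      rw [← hc]
      exact Finset.sum_congr rfl fun x _ => hdiff x
    linarith
  have habssum : ∑ x, |c x| = 2 * t := by
    have h1 : ∑ x, |c x| = (∑ x, cp x) + (∑ x, cm x) := by
      rw [← Finset.sum_add_distrib]
      exact Finset.sum_congr rfl fun x _ => (habs x).symm
    rw [h1, hcmsum]; ring
  have key : ∀ z, (∑ x, ∑ y, cp x * cm y * (A x z - A y z)) = t * (∑ x, c x * A x z) := by
    intro z
    have step1 : ∀ x, (∑ y, cp x * cm y * (A x z - A y z))
        = cp x * A x z * t - cp x * ∑ y, cm y * A y z := by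
      intro x
      calc ∑ y, cp x * cm y * (A x z - A y z)
          = ∑ y, (cp x * A x z * cm y - cp x * (cm y * A y z)) :=
            Finset.sum_congr rfl fun y _ => by ring
        _ = cp x * A x z * (∑ y, cm y) - cp x * ∑ y, cm y * A y z := by
            rw [Finset.sum_sub_distrib, ← Finset.mul_sum, ← Finset.mul_sum]
        _ = cp x * A x z * t - cp x * ∑ y, cm y * A y z := by rw [hcmsum]
    calc (∑ x, ∑ y, cp x * cm y * (A x z - A y z))
        = ∑ x, (cp x * A x z * t - cp x * ∑ y, cm y * A y z) :=
          Finset.sum_congr rfl fun x _ => step1 x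
      _ = (∑ x, cp x * A x z) * t - t * (∑ y, cm y * A y z) := by
          rw [Finset.sum_sub_distrib, ← Finset.sum_mul, ← Finset.sum_mul, ht]
      _ = t * ((∑ x, cp x * A x z) - (∑ y, cm y * A y z)) := by ring
      _ = t * (∑ x, c x * A x z) := by
          congr 1
          rw [← Finset.sum_sub_distrib]
          refine Finset.sum_congr rfl fun x _ => ?_
          rw [← hdiff x]; ring
  have key2 : t * (∑ z, |∑ x, c x * A x z|) ≤ t * (t * B) := by
    calc t * (∑ z, |∑ x, c x * A x z|)
        = ∑ z, |t * (∑ x, c x * A x z)| := by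
          rw [Finset.mul_sum]
          exact Finset.sum_congr rfl fun z _ => by
            rw [abs_mul, abs_of_nonneg ht0]
      _ = ∑ z, |∑ x, ∑ y, cp x * cm y * (A x z - A y z)| := by
          exact Finset.sum_congr rfl fun z _ => by rw [key z]
      _ ≤ ∑ z, ∑ x, ∑ y, |cp x * cm y * (A x z - A y z)| := by
          refine Finset.sum_le_sum fun z _ => ?_
          calc |∑ x, ∑ y, cp x * cm y * (A x z - A y z)|
              ≤ ∑ x, |∑ y, cp x * cm y * (A x z - A y z)| := Finset.abs_sum_le_sum_abs _ _
            _ ≤ ∑ x, ∑ y, |cp x * cm y * (A x z - A y z)| :=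
                Finset.sum_le_sum fun x _ => Finset.abs_sum_le_sum_abs _ _
      _ = ∑ x, ∑ y, ∑ z, cp x * cm y * |A x z - A y z| := by
          rw [Finset.sum_comm]
          refine Finset.sum_congr rfl fun x _ => ?_
          rw [Finset.sum_comm]
          refine Finset.sum_congr rfl fun y _ => Finset.sum_congr rfl fun z _ => ?_
          rw [abs_mul, abs_mul, abs_of_nonneg (hcp0 x), abs_of_nonneg (hcm0 y)]
      _ ≤ ∑ x, ∑ y, cp x * cm y * B := by
          refine Finset.sum_le_sum fun x _ => Finset.sum_le_sum fun y _ => ?_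
          rw [← Finset.mul_sum]
          exact mul_le_mul_of_nonneg_left (hAB x y) (mul_nonneg (hcp0 x) (hcm0 y))
      _ = t * (t * B) := by
          have h1 : ∀ x, (∑ y, cp x * cm y * B) = cp x * (t * B) := by
            intro x
            rw [← Finset.sum_mul, ← Finset.mul_sum, hcmsum]
            ring
          calc ∑ x, ∑ y, cp x * cm y * B = ∑ x, cp x * (t * B) :=
                Finset.sum_congr rfl fun x _ => h1 x
            _ = (∑ x, cp x) * (t * B) := (Finset.sum_mul _ _ _).symm
            _ = t * (t * B) := by rw [← ht]
  rcases eq_or_lt_of_le ht0 with h | h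
  · have hc0 : ∀ x ∈ Finset.univ, |c x| = 0 := by
      rw [← Finset.sum_eq_zero_iff_of_nonneg (fun x _ => abs_nonneg (c x))]
      rw [habssum, ← h]; ring
    have hc0' : ∀ x, c x = 0 := fun x => abs_eq_zero.1 (hc0 x (Finset.mem_univ x))
    have hL : ∑ z, |∑ x, c x * A x z| = 0 := by
      refine Finset.sum_eq_zero fun z _ => ?_
      rw [Finset.sum_eq_zero fun x _ => by rw [hc0' x]; ring, abs_zero]
    rw [hL, habssum, ← h]
    positivity
  · have h3 : ∑ z, |∑ x, c x * A x z| ≤ t * B := le_of_mul_le_mul_left key2 h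
    calc ∑ z, |∑ x, c x * A x z| ≤ t * B := h3
      _ = B / 2 * (2 * t) := by ring
      _ = B / 2 * ∑ x, |c x| := by rw [habssum]

theorem iterate_eq (P : S → S → ℝ) (n : ℕ) (μ : S → ℝ) :
    (fun v y => ∑ x, v x * P x y)^[n] μ = fun y => ∑ x, μ x * (Matrix.of P ^ n) x y := by
  induction n with
  | zero =>
    funext y
    simp [Matrix.one_apply]
  | succ n ih =>
    rw [Function.iterate_succ_apply', ih]
    funext y
    show ∑ x, (∑ w, μ w * (Matrix.of P ^ n) w x) * P x y = _
    rw [show (∑ x, (∑ w, μ w * (Matrix.of P ^ n) w x) * P x y)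
        = ∑ x, ∑ w, μ w * (Matrix.of P ^ n) w x * P x y by
      exact Finset.sum_congr rfl fun x _ => Finset.sum_mul _ _ _]
    rw [Finset.sum_comm]
    refine Finset.sum_congr rfl fun w _ => ?_
    rw [pow_succ, Matrix.mul_apply, Finset.mul_sum]
    exact Finset.sum_congr rfl fun x _ => by rw [Matrix.of_apply]; ring

end Thm1Aux

open Thm1Aux in
/-- Theorem 1 (asymptotic form): for any `ε > 0`, eventually in `n` the total variation
distance between `μ Pⁿ` and `ν Pⁿ` contracts geometrically at rate `r(Q) + ε`. -/
theorem tv_le_specRad_add_eps_pow [Nonempty S]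
    (P : S → S → ℝ) (hP0 : ∀ x y, 0 ≤ P x y) (hP1 : ∀ x, ∑ y, P x y = 1) :
    ∀ ε : ℝ, 0 < ε → ∃ N : ℕ, ∀ n : ℕ, N ≤ n →
      ∀ μ ν : S → ℝ, (∀ x, 0 ≤ μ x) → (∀ x, 0 ≤ ν x) →
        (∑ x, μ x = 1) → (∑ x, ν x = 1) →
        ∑ x, |((fun v y => ∑ x, v x * P x y)^[n] μ) x -
              ((fun v y => ∑ x, v x * P x y)^[n] ν) x|
          ≤ (specRad (residualQ P) + ε) ^ n * ∑ x, |μ x - ν x| := by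
  intro ε hε
  set Q : Matrix (S × S) (S × S) ℝ := residualQ P with hQ
  set M : Matrix (S × S) (S × S) ℂ := Q.map (Complex.ofReal ·) with hM
  haveI : CompleteSpace (Matrix (S × S) (S × S) ℂ) := FiniteDimensional.complete ℂ _
  have hspec_ne : (spectrum ℂ M).Nonempty := spectrum.nonempty M
  have hspec_cpt : IsCompact (spectrum ℂ M) := spectrum.isCompact M
  obtain ⟨c₀, hc₀mem, hc₀max⟩ :=
    hspec_cpt.exists_isMaxOn hspec_ne continuous_norm.continuousOn
  have hr : specRad Q = ‖c₀‖ := by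
    apply IsGreatest.csSup_eq
    constructor
    · exact ⟨c₀, hc₀mem, rfl⟩
    · rintro r ⟨c, hc, rfl⟩
      exact hc₀max hc
  have hsr : spectralRadius ℂ M = (‖c₀‖₊ : ENNReal) := by
    apply le_antisymm
    · refine iSup₂_le fun k hk => ?_
      have h1 : ‖k‖ ≤ ‖c₀‖ := hc₀max hk
      exact_mod_cast h1
    · exact le_iSup₂ (f := fun k (_ : k ∈ spectrum ℂ M) => (‖k‖₊ : ENNReal)) c₀ hc₀mem
  have htend := spectrum.pow_nnnorm_pow_one_div_tendsto_nhds_spectralRadius M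
  rw [hsr] at htend
  set B : NNReal := ‖c₀‖₊ + ε.toNNReal with hBdef
  have hlt : (‖c₀‖₊ : ENNReal) < (B : ENNReal) := by
    rw [hBdef]
    push_cast
    exact ENNReal.coe_lt_coe.2 (lt_add_of_pos_right _ (by simp [Real.toNNReal_pos, hε]))
  have hev := htend.eventually_lt_const hlt
  rw [Filter.eventually_atTop] at hev
  obtain ⟨N₀, hN₀⟩ := hev
  refine ⟨max N₀ 1, fun n hn μ ν hμ0 hν0 hμ1 hν1 => ?_⟩
  have hn1 : 1 ≤ n := le_trans (le_max_right _ _) hn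
  have hnN : N₀ ≤ n := le_trans (le_max_left _ _) hn
  -- norm bound from Gelfand
  have hMn : ‖M ^ n‖₊ ≤ B ^ n := by
    have h1 := hN₀ n hnN
    have hne : (n : ℝ) ≠ 0 := Nat.cast_ne_zero.2 (by omega)
    have h2 : (((‖M ^ n‖₊ : ENNReal) ^ ((1:ℝ)/(n:ℝ))) ^ (n:ℝ)) ≤ ((B : ENNReal)) ^ (n:ℝ) :=
      ENNReal.rpow_le_rpow h1.le (by positivity)
    rw [← ENNReal.rpow_mul, one_div, inv_mul_cancel₀ hne, ENNReal.rpow_one,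
      ENNReal.rpow_natCast] at h2
    exact_mod_cast h2
  have hBr : (B : ℝ) = specRad Q + ε := by
    rw [hr, hBdef, NNReal.coe_add, Real.coe_toNNReal ε hε.le, coe_nnnorm]
  have hMnR : ‖M ^ n‖ ≤ (specRad Q + ε) ^ n := by
    rw [← hBr]
    calc ‖M ^ n‖ = ((‖M ^ n‖₊ : NNReal) : ℝ) := (coe_nnnorm _).symm
      _ ≤ ((B ^ n : NNReal) : ℝ) := by exact_mod_cast hMn
      _ = (B : ℝ) ^ n := by push_cast; ring
  -- row-sum bound from the coupling inequality
  have hrowB : ∀ x y : S, ∑ z, |(Matrix.of P ^ n) x z - (Matrix.of P ^ n) y z|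
      ≤ 2 * ‖M ^ n‖ := by
    intro x y
    have h1 : gvec P n (x, y) ≤ ((Q ^ n) *ᵥ fun _ => (2:ℝ)) (x, y) :=
      gvec_le_pow P hP0 hP1 n (x, y)
    have h2 : ((Q ^ n) *ᵥ fun _ => (2:ℝ)) (x, y) ≤ 2 * ‖M ^ n‖ := by
      rw [Matrix.mulVec, dotProduct]
      have h3 : ∑ q, (Q ^ n) (x, y) q * 2 ≤ ∑ q, |(Q ^ n) (x, y) q| * 2 :=
        Finset.sum_le_sum fun q _ => by
          have := le_abs_self ((Q ^ n) (x, y) q)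
          linarith
      refine h3.trans ?_
      rw [← Finset.sum_mul]
      have h4 : ∑ q, |(Q ^ n) (x, y) q| ≤ ‖M ^ n‖ := by
        rw [hM, map_ofReal_pow]
        exact rowsum_le_norm (Q ^ n) (x, y)
      linarith
    exact h1.trans h2
  -- total variation splitting
  rw [iterate_eq P n μ, iterate_eq P n ν]
  have hsub : ∀ z : S, (∑ x, μ x * (Matrix.of P ^ n) x z) - (∑ x, ν x * (Matrix.of P ^ n) x z)
      = ∑ x, (μ x - ν x) * (Matrix.of P ^ n) x z := by
    intro z
    rw [← Finset.sum_sub_distrib]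
    exact Finset.sum_congr rfl fun x _ => by ring
  have hc : ∑ x, (μ x - ν x) = 0 := by
    rw [Finset.sum_sub_distrib, hμ1, hν1]; ring
  have hbd := tv_bound (Matrix.of P ^ n) (fun x => μ x - ν x) hc
    (2 * ‖M ^ n‖) (by positivity) hrowB
  calc ∑ z, |(∑ x, μ x * (Matrix.of P ^ n) x z) - (∑ x, ν x * (Matrix.of P ^ n) x z)|
      = ∑ z, |∑ x, (μ x - ν x) * (Matrix.of P ^ n) x z| := by
        exact Finset.sum_congr rfl fun z _ => by rw [hsub z]
    _ ≤ 2 * ‖M ^ n‖ / 2 * ∑ x, |μ x - ν x| := hbd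
    _ = ‖M ^ n‖ * ∑ x, |μ x - ν x| := by ring_nf
    _ ≤ (specRad Q + ε) ^ n * ∑ x, |μ x - ν x| :=
        mul_le_mul_of_nonneg_right hMnR (Finset.sum_nonneg fun x _ => abs_nonneg _)
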